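/- For each fixed k ∈ {1,…,6}, the sizes of the image disks are strictly decreasing in n: for every positive integer n, diam(φ_{k,n+1}(𝔻)) < diam(φ_{k,n}(𝔻)). -/

import Mathlib

open Complex Metric Set
open scoped ENNReal

noncomputable section

/-- λ = √3 -/
def lam : ℝ := Real.sqrt 3

/-- The Möbius map f(z) = ((λ−1)z+1)/(−z+λ+1). -/
def apolF : ℂ → ℂ := fun z => (((lam : ℂ) - 1) * z + 1) / (-z + (lam : ℂ) + 1)

/-- Rotation by angle θ. -/
def Rot (θ : ℝ) : ℂ → ℂ := fun z => Complex.exp ((θ : ℂ) * Complex.I) * z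

/-- θ_k = (−1)^k · 2π/3 -/
def thetaA (k : ℕ) : ℝ := (-1 : ℝ) ^ k * (2 * Real.pi / 3)

/-- θ'_k = 2πk/3 -/
def thetaB (k : ℕ) : ℝ := 2 * Real.pi * k / 3

/-- The Apollonian generators φ_{k,n} = R_{θ'_k} ∘ f^n ∘ R_{θ_k} ∘ f. -/
def phi (k n : ℕ) : ℂ → ℂ := Rot (thetaB k) ∘ (apolF^[n]) ∘ Rot (thetaA k) ∘ apolF

/-- The closed unit disk 𝔻. -/
def unitD : Set ℂ := Metric.closedBall (0 : ℂ) 1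

lemma lam_sq : lam ^ 2 = 3 := Real.sq_sqrt (by norm_num)

lemma lam_pos : 0 < lam := Real.sqrt_pos.mpr (by norm_num)

lemma lam_lt_two : lam < 2 := by nlinarith [lam_sq, lam_pos]

lemma one_lt_lam : 1 < lam := by nlinarith [lam_sq, lam_pos]

lemma lamC_sq : ((lam : ℂ)) ^ 2 = 3 := by
  norm_cast
  exact_mod_cast lam_sq

/-- denominator nonvanishing: -m z + (λ + m) ≠ 0 on the closed disk -/
lemma aux_ne (m : ℕ) (z : ℂ) (hz : ‖z‖ ≤ 1) :
    -(m : ℂ) * z + ((lam : ℂ) + m) ≠ 0 := by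
  intro h
  have h3 : ((lam + m : ℝ) : ℂ) = (m : ℂ) * z := by push_cast; linear_combination h
  have h4 := congrArg (‖·‖) h3
  rw [Complex.norm_real, Real.norm_eq_abs, norm_mul, Complex.norm_natCast] at h4
  have h5 : |lam + (m : ℝ)| = lam + m :=
    _root_.abs_of_pos (by have h6 := lam_pos; have h7 : (0:ℝ) ≤ (m:ℝ) := Nat.cast_nonneg m; linarith)
  rw [h5] at h4
  have hm : (0:ℝ) ≤ (m:ℝ) := Nat.cast_nonneg m
  nlinarith [lam_pos, norm_nonneg z]

lemma aux_ne1 (z : ℂ) (hz : ‖z‖ ≤ 1) : -z + (lam : ℂ) + 1 ≠ 0 := by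
  intro h
  have h3 : ((lam + 1 : ℝ) : ℂ) = z := by push_cast; linear_combination h
  have h4 := congrArg (‖·‖) h3
  rw [Complex.norm_real, Real.norm_eq_abs] at h4
  have h5 : |lam + (1 : ℝ)| = lam + 1 := _root_.abs_of_pos (by have := lam_pos; linarith)
  rw [h5] at h4
  nlinarith [lam_pos]

/-- f maps the closed unit disk into itself. -/
lemma apolF_mem (z : ℂ) (hz : ‖z‖ ≤ 1) : ‖apolF z‖ ≤ 1 := by
  have hden := aux_ne1 z hz
  rw [apolF, norm_div, div_le_one (norm_pos_iff.mpr hden)]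
  have hsq : normSq (((lam : ℂ) - 1) * z + 1) ≤ normSq (-z + (lam : ℂ) + 1) := by
    set x := z.re
    set y := z.im
    have hs : x ^ 2 + y ^ 2 ≤ 1 := by
      have := Complex.sq_norm z
      rw [Complex.normSq_apply] at this
      nlinarith [norm_nonneg z]
    have hx1 : x ≤ 1 := by nlinarith [sq_nonneg y]
    have hxm : -1 ≤ x := by nlinarith [sq_nonneg y]
    have h2l : 3 < 2 * lam := by nlinarith [lam_sq, lam_pos]
    simp only [Complex.normSq_apply, Complex.add_re, Complex.add_im, Complex.mul_re,
      Complex.mul_im, Complex.sub_re, Complex.sub_im, Complex.ofReal_re, Complex.ofReal_im,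
      Complex.one_re, Complex.one_im, Complex.neg_re, Complex.neg_im]
    nlinarith [lam_sq, mul_nonneg (by linarith : (0:ℝ) ≤ 1 - x)
        (show (0:ℝ) ≤ 4 * lam - (2 * lam - 3) * (1 + x) by nlinarith),
      mul_nonneg (by linarith : (0:ℝ) ≤ 2 * lam - 3) (sq_nonneg y)]
  have h1 := Complex.sq_norm (((lam : ℂ) - 1) * z + 1)
  have h2 := Complex.sq_norm (-z + (lam : ℂ) + 1)
  nlinarith [norm_nonneg (((lam : ℂ) - 1) * z + 1),
    norm_nonneg (-z + (lam : ℂ) + 1)]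

/-- Explicit formula for the iterates of f on the closed disk. -/
lemma apolF_iter (m : ℕ) (z : ℂ) (hz : ‖z‖ ≤ 1) :
    apolF^[m] z = (((lam : ℂ) - m) * z + m) / (-(m : ℂ) * z + ((lam : ℂ) + m)) := by
  induction m with
  | zero =>
      have hL : (lam : ℂ) ≠ 0 := by
        exact_mod_cast ne_of_gt lam_pos
      simp [hL]
  | succ m ih =>
      have hY : -(m : ℂ) * z + ((lam : ℂ) + m) ≠ 0 := aux_ne m z hz
      have hL : (lam : ℂ) ≠ 0 := by exact_mod_cast ne_of_gt lam_pos
      rw [Function.iterate_succ_apply', ih, apolF]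
      push_cast
      have e1 : ((lam : ℂ) - 1) * ((((lam : ℂ) - m) * z + m) / (-(m : ℂ) * z + ((lam : ℂ) + m))) + 1
          = ((lam : ℂ) * (((lam : ℂ) - ((m : ℂ) + 1)) * z + ((m : ℂ) + 1)))
            / (-(m : ℂ) * z + ((lam : ℂ) + m)) := by
        rw [mul_div_assoc', div_add' _ _ _ hY]
        congr 1
        ring
      have e2 : -((((lam : ℂ) - m) * z + m) / (-(m : ℂ) * z + ((lam : ℂ) + m))) + (lam : ℂ) + 1
          = ((lam : ℂ) * (-((m : ℂ) + 1) * z + ((lam : ℂ) + ((m : ℂ) + 1))))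
            / (-(m : ℂ) * z + ((lam : ℂ) + m)) := by
        rw [← neg_div, div_add' _ _ _ hY, div_add' _ _ _ hY]
        congr 1
        ring
      rw [e1, e2, div_div_div_comm, div_self hY, div_one, mul_div_mul_left _ _ hL]

lemma normSq_diff (c d z : ℂ) :
    normSq (c * z + d) - normSq ((starRingEnd ℂ) d * z + (starRingEnd ℂ) c)
      = (normSq d - normSq c) * (1 - normSq z) := by
  simp only [Complex.normSq_apply, Complex.add_re, Complex.add_im, Complex.mul_re,
    Complex.mul_im, Complex.conj_re, Complex.conj_im]
  ring

lemma mobius_key (a b c d z : ℂ) (hΔ : normSq c < normSq d) (hden : c * z + d ≠ 0) :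
    (a * z + b) / (c * z + d)
        - (b * (starRingEnd ℂ) d - a * (starRingEnd ℂ) c) / ((normSq d - normSq c : ℝ) : ℂ)
      = ((a * d - b * c) * ((starRingEnd ℂ) d * z + (starRingEnd ℂ) c))
        / ((c * z + d) * ((normSq d - normSq c : ℝ) : ℂ)) := by
  have hΔ0 : ((normSq d - normSq c : ℝ) : ℂ) ≠ 0 := by
    rw [Complex.ofReal_ne_zero]
    exact ne_of_gt (by linarith)
  have hdd : ((normSq d - normSq c : ℝ) : ℂ)
      = d * (starRingEnd ℂ) d - c * (starRingEnd ℂ) c := by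
    push_cast
    rw [Complex.mul_conj, Complex.mul_conj]
  rw [hdd] at hΔ0 ⊢
  rw [div_sub_div _ _ hden hΔ0]
  congr 1
  ring

set_option maxHeartbeats 1000000 in
/-- The image of the closed unit disk under a Möbius map with `normSq c < normSq d`. -/
lemma mobius_image (a b c d : ℂ) (hdet : a * d - b * c ≠ 0) (hΔ : normSq c < normSq d) :
    (fun z => (a * z + b) / (c * z + d)) '' Metric.closedBall 0 1 =
      Metric.closedBall
        ((b * (starRingEnd ℂ) d - a * (starRingEnd ℂ) c) / ((normSq d - normSq c : ℝ) : ℂ))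
        (‖a * d - b * c‖ / (normSq d - normSq c)) := by
  set O := (b * (starRingEnd ℂ) d - a * (starRingEnd ℂ) c) / ((normSq d - normSq c : ℝ) : ℂ)
    with hO
  set r := ‖a * d - b * c‖ / (normSq d - normSq c) with hr
  have hΔ0 : (0 : ℝ) < normSq d - normSq c := by linarith
  have habs : ‖c‖ < ‖d‖ := by
    rw [Complex.norm_def, Complex.norm_def]
    exact Real.sqrt_lt_sqrt (normSq_nonneg c) hΔ
  have hden : ∀ z : ℂ, ‖z‖ ≤ 1 → c * z + d ≠ 0 := by
    intro z hz h
    have h1 : d = -(c * z) := by linear_combination h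
    have h2 : ‖d‖ ≤ ‖c‖ := by
      rw [h1, norm_neg, norm_mul]
      calc ‖c‖ * ‖z‖ ≤ ‖c‖ * 1 :=
            mul_le_mul_of_nonneg_left hz (norm_nonneg c)
        _ = ‖c‖ := mul_one _
    linarith
  have hdet0 : 0 < ‖a * d - b * c‖ := norm_pos_iff.mpr hdet
  have key : ∀ z : ℂ, c * z + d ≠ 0 →
      (dist ((a * z + b) / (c * z + d)) O ≤ r ↔ ‖z‖ ≤ 1) := by
    intro z hz0
    have hC0 : 0 < ‖c * z + d‖ := norm_pos_iff.mpr hz0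
    have hnd := normSq_diff c d z
    have h1 := Complex.sq_norm (c * z + d)
    have h2 := Complex.sq_norm ((starRingEnd ℂ) d * z + (starRingEnd ℂ) c)
    have h3 := Complex.sq_norm z
    have hB0 := norm_nonneg ((starRingEnd ℂ) d * z + (starRingEnd ℂ) c)
    have hKD : 0 < ‖a * d - b * c‖ * (normSq d - normSq c) := mul_pos hdet0 hΔ0
    rw [Complex.dist_eq, mobius_key a b c d z hΔ hz0, norm_div, norm_mul, norm_mul,
      Complex.norm_real, Real.norm_eq_abs, _root_.abs_of_pos hΔ0, hr,
      div_le_div_iff₀ (by positivity) hΔ0]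
    constructor
    · intro h
      have hBC : ‖(starRingEnd ℂ) d * z + (starRingEnd ℂ) c‖
          ≤ ‖c * z + d‖ := by nlinarith [hKD]
      have hsq : normSq ((starRingEnd ℂ) d * z + (starRingEnd ℂ) c) ≤ normSq (c * z + d) := by
        nlinarith [hB0, hC0]
      have hz1 : normSq z ≤ 1 := by nlinarith [hΔ0]
      nlinarith [norm_nonneg z]
    · intro h
      have hz1 : normSq z ≤ 1 := by nlinarith [norm_nonneg z]
      have hsq : normSq ((starRingEnd ℂ) d * z + (starRingEnd ℂ) c) ≤ normSq (c * z + d) := by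
        nlinarith [mul_nonneg (le_of_lt hΔ0) (by linarith : (0:ℝ) ≤ 1 - normSq z)]
      have hBC : ‖(starRingEnd ℂ) d * z + (starRingEnd ℂ) c‖
          ≤ ‖c * z + d‖ := by nlinarith [hB0, hC0]
      nlinarith [hKD, hdet0, hΔ0]
  have hdd : ((normSq d - normSq c : ℝ) : ℂ)
      = d * (starRingEnd ℂ) d - c * (starRingEnd ℂ) c := by
    push_cast
    rw [Complex.mul_conj, Complex.mul_conj]
  ext w
  simp only [mem_image]
  constructor
  · rintro ⟨z, hz, rfl⟩
    have hz' : ‖z‖ ≤ 1 := by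
      rw [mem_closedBall, Complex.dist_eq, sub_zero] at hz
      exact hz
    rw [mem_closedBall]
    exact (key z (hden z hz')).2 hz'
  · intro hw
    rw [mem_closedBall] at hw
    have hcw : a - c * w ≠ 0 := by
      intro h
      have hc0 : c ≠ 0 := by
        intro h0
        apply hdet
        have ha0 : a = 0 := by rw [h0] at h; linear_combination h
        rw [ha0, h0]; ring
      have hwv : w = a / c := by
        rw [eq_div_iff hc0]
        linear_combination -h
      have heq : w - O = (starRingEnd ℂ) d * (a * d - b * c)
          / (c * ((normSq d - normSq c : ℝ) : ℂ)) := by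
        rw [hwv, hO, hdd]
        have hΔC : (d * (starRingEnd ℂ) d - c * (starRingEnd ℂ) c) ≠ 0 := by
          rw [← hdd, Complex.ofReal_ne_zero]; exact ne_of_gt hΔ0
        rw [div_sub_div _ _ hc0 hΔC]
        congr 1
        ring
      have hda := congrArg (‖·‖) heq
      rw [← Complex.dist_eq, norm_div, norm_mul, norm_mul, Complex.norm_conj,
        Complex.norm_real, Real.norm_eq_abs, _root_.abs_of_pos hΔ0] at hda
      rw [hda, hr] at hw
      have hc0' : 0 < ‖c‖ := norm_pos_iff.mpr hc0
      rw [div_le_div_iff₀ (by positivity) hΔ0] at hw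
      nlinarith [mul_pos hdet0 hΔ0, habs]
    have hq : (d * w - b) / (a - c * w) * (a - c * w) = d * w - b := div_mul_cancel₀ _ hcw
    have hden2 : c * ((d * w - b) / (a - c * w)) + d = (a * d - b * c) / (a - c * w) := by
      rw [eq_div_iff hcw]
      linear_combination c * hq
    have hzden : c * ((d * w - b) / (a - c * w)) + d ≠ 0 := by
      rw [hden2]; exact div_ne_zero hdet hcw
    have him : (a * ((d * w - b) / (a - c * w)) + b)
        / (c * ((d * w - b) / (a - c * w)) + d) = w := by
      rw [div_eq_iff hzden]
      linear_combination hq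
    refine ⟨(d * w - b) / (a - c * w), ?_, him⟩
    have h1 : ‖(d * w - b) / (a - c * w)‖ ≤ 1 := by
      apply (key _ hzden).1
      rw [him]
      exact hw
    rw [mem_closedBall, Complex.dist_eq, sub_zero]
    exact h1

lemma diam_closedBall_eq (x : ℂ) (r : ℝ) (hr : 0 ≤ r) :
    Metric.diam (Metric.closedBall x r) = 2 * r := by
  refine le_antisymm (Metric.diam_closedBall hr) ?_
  have h1 : x + r ∈ Metric.closedBall x r := by
    rw [mem_closedBall, Complex.dist_eq, show x + (r:ℂ) - x = ((r:ℝ):ℂ) by push_cast; ring,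
      Complex.norm_real, Real.norm_eq_abs, _root_.abs_of_nonneg hr]
  have h2 : x - r ∈ Metric.closedBall x r := by
    rw [mem_closedBall, Complex.dist_eq, show x - (r:ℂ) - x = ((-r:ℝ):ℂ) by push_cast; ring,
      Complex.norm_real, Real.norm_eq_abs, abs_neg, _root_.abs_of_nonneg hr]
  have h3 := Metric.dist_le_diam_of_mem Metric.isBounded_closedBall h1 h2
  rw [Complex.dist_eq, show x + (r:ℂ) - (x - (r:ℂ)) = ((2*r : ℝ) : ℂ) by push_cast; ring,
    Complex.norm_real, Real.norm_eq_abs, _root_.abs_of_nonneg (by linarith : (0:ℝ) ≤ 2*r)] at h3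
  exact h3

lemma cos_thetaA (k : ℕ) : Real.cos (thetaA k) = -(1/2) := by
  have h23 : Real.cos (2 * Real.pi / 3) = -(1/2) := by
    rw [show 2 * Real.pi / 3 = Real.pi - Real.pi / 3 by ring, Real.cos_pi_sub,
      Real.cos_pi_div_three]
  rw [thetaA]
  rcases Nat.even_or_odd k with hk | hk
  · rw [hk.neg_one_pow]
    simpa using h23
  · rw [hk.neg_one_pow]
    rw [show (-1 : ℝ) * (2 * Real.pi / 3) = -(2 * Real.pi / 3) by ring, Real.cos_neg]
    exact h23

set_option maxHeartbeats 1000000 in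
/-- The diameter of φ_{k,m}(𝔻). -/
lemma diam_phi (k m : ℕ) :
    Metric.diam (phi k m '' unitD)
      = 18 / (6 * lam * m ^ 2 + (18 + 6 * lam) * m + (6 * lam + 9)) := by
  obtain ⟨E, hE⟩ : ∃ x : ℂ, x = Complex.exp ((thetaA k : ℂ) * Complex.I) := ⟨_, rfl⟩
  obtain ⟨Ψ, hΨ⟩ : ∃ x : ℂ, x = Complex.exp ((thetaB k : ℂ) * Complex.I) := ⟨_, rfl⟩
  obtain ⟨A, hA⟩ : ∃ x : ℂ, x = Ψ * (((lam:ℂ) - m) * E * ((lam:ℂ) - 1) - m) := ⟨_, rfl⟩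
  obtain ⟨B, hB⟩ : ∃ x : ℂ, x = Ψ * (((lam:ℂ) - m) * E + m * ((lam:ℂ) + 1)) := ⟨_, rfl⟩
  obtain ⟨C, hC⟩ : ∃ x : ℂ, x = -(m:ℂ) * E * ((lam:ℂ) - 1) - ((lam:ℂ) + m) := ⟨_, rfl⟩
  obtain ⟨D, hD⟩ : ∃ x : ℂ, x = -(m:ℂ) * E + ((lam:ℂ) + m) * ((lam:ℂ) + 1) := ⟨_, rfl⟩
  have hEabs : ‖E‖ = 1 := by rw [hE]; exact Complex.norm_exp_ofReal_mul_I _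
  have hΨabs : ‖Ψ‖ = 1 := by rw [hΨ]; exact Complex.norm_exp_ofReal_mul_I _
  have hEU : E * (starRingEnd ℂ) E = 1 := by
    rw [Complex.mul_conj, Complex.normSq_eq_norm_sq, hEabs]
    norm_num
  have hES : E + (starRingEnd ℂ) E = -1 := by
    rw [Complex.add_conj]
    have hre : E.re = Real.cos (thetaA k) := by rw [hE]; exact Complex.exp_ofReal_mul_I_re _
    rw [hre, cos_thetaA]
    norm_num
  have hL2 : ((lam:ℂ)) ^ 2 = 3 := lamC_sq
  -- pointwise formula for phi on the disk
  have hpt : ∀ z ∈ unitD, phi k m z = (A * z + B) / (C * z + D) := by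
    intro z hz
    have hz' : ‖z‖ ≤ 1 := by
      rw [unitD, mem_closedBall, Complex.dist_eq, sub_zero] at hz
      exact hz
    have hfz : ‖apolF z‖ ≤ 1 := apolF_mem z hz'
    have hw : ‖E * apolF z‖ ≤ 1 := by
      rw [norm_mul, hEabs, one_mul]; exact hfz
    have hmid : -(m : ℂ) * (E * apolF z) + ((lam:ℂ) + m) ≠ 0 := aux_ne m _ hw
    have hz1 : -z + (lam:ℂ) + 1 ≠ 0 := aux_ne1 z hz'
    have hF : apolF z * (-z + (lam:ℂ) + 1) = ((lam:ℂ) - 1) * z + 1 := by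
      rw [apolF]; exact div_mul_cancel₀ _ hz1
    have hprod : (-(m : ℂ) * (E * apolF z) + ((lam:ℂ) + m)) * (-z + (lam:ℂ) + 1)
        = C * z + D := by
      rw [hC, hD]
      linear_combination (-(m:ℂ) * E) * hF
    have hCD : C * z + D ≠ 0 := by
      rw [← hprod]; exact mul_ne_zero hmid hz1
    have key0 : phi k m z = Ψ * (apolF^[m] (E * apolF z)) := by
      rw [hΨ, hE]; rfl
    rw [key0, apolF_iter m _ hw, mul_div_assoc', div_eq_div_iff hmid hCD]
    apply mul_right_cancel₀ hz1
    rw [hA, hB, hC, hD]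
    linear_combination (Ψ * (((lam:ℂ) - m) * E) *
        ((-(m:ℂ) * E * ((lam:ℂ) - 1) - ((lam:ℂ) + m)) * z
          + (-(m:ℂ) * E + ((lam:ℂ) + m) * ((lam:ℂ) + 1)))
      + (m:ℂ) * E * ((Ψ * (((lam:ℂ) - m) * E * ((lam:ℂ) - 1) - m)) * z
          + Ψ * (((lam:ℂ) - m) * E + m * ((lam:ℂ) + 1)))) * hF
  have himg : phi k m '' unitD = (fun z => (A * z + B) / (C * z + D)) '' unitD :=
    Set.image_congr hpt
  rw [himg]
  have hdet_eq : A * D - B * C = 9 * Ψ * E := by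
    rw [hA, hB, hC, hD]
    linear_combination (Ψ * (3 * E + E * (lam:ℂ) ^ 2)) * hL2
  have hdet : A * D - B * C ≠ 0 := by
    rw [hdet_eq, hΨ, hE]
    exact mul_ne_zero (mul_ne_zero (by norm_num) (Complex.exp_ne_zero _)) (Complex.exp_ne_zero _)
  have hPpos : (0:ℝ) < 6 * lam * m ^ 2 + (18 + 6 * lam) * m + (6 * lam + 9) := by
    have hm : (0:ℝ) ≤ (m:ℝ) := Nat.cast_nonneg m
    nlinarith [lam_pos]
  have hDelta : normSq D - normSq C
      = 6 * lam * m ^ 2 + (18 + 6 * lam) * m + (6 * lam + 9) := by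
    have h1 : ((normSq D - normSq C : ℝ) : ℂ)
        = ((6 * lam * m ^ 2 + (18 + 6 * lam) * m + (6 * lam + 9) : ℝ) : ℂ) := by
      rw [Complex.ofReal_sub, ← Complex.mul_conj, ← Complex.mul_conj]
      rw [hC, hD]
      simp only [map_add, map_mul, map_sub, map_neg, map_one, map_natCast,
        Complex.conj_ofReal]
      push_cast
      linear_combination (2 * (lam:ℂ) * (m:ℂ) ^ 2 - (lam:ℂ) ^ 2 * (m:ℂ) ^ 2) * hEU
        + (-2 * (lam:ℂ) * (m:ℂ) ^ 2 - 2 * (lam:ℂ) ^ 2 * (m:ℂ)) * hES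
        + (3 + 6 * (m:ℂ) + 2 * (lam:ℂ) + 2 * (lam:ℂ) * (m:ℂ) + (lam:ℂ) ^ 2) * hL2
    exact_mod_cast h1
  have hΔ : normSq C < normSq D := by
    have := hDelta
    linarith
  rw [unitD, mobius_image A B C D hdet hΔ]
  have habs9 : ‖A * D - B * C‖ = 9 := by
    rw [hdet_eq, norm_mul, norm_mul, hΨabs, hEabs]
    norm_num
  have hrpos : (0:ℝ) ≤ ‖A * D - B * C‖ / (normSq D - normSq C) := by
    rw [habs9, hDelta]; positivity
  rw [diam_closedBall_eq _ _ hrpos, habs9, hDelta]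
  ring

/-- For fixed k, the diameters of the image disks φ_{k,n}(𝔻) are strictly decreasing in n. -/
theorem apollonian_disks_decreasing (k : ℕ) (hk1 : 1 ≤ k) (hk6 : k ≤ 6)
    (n : ℕ) (hn : 1 ≤ n) :
    Metric.diam (phi k (n + 1) '' unitD) < Metric.diam (phi k n '' unitD) := by
  rw [diam_phi, diam_phi]
  have hm : (0:ℝ) ≤ (n:ℝ) := Nat.cast_nonneg n
  apply div_lt_div_of_pos_left (by norm_num)
  · nlinarith [lam_pos]
  · push_cast
    nlinarith [lam_pos]

end
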